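/- Let A = [a_{ij}] be a Bott matrix of size n and let Γ(A) be the subgroup of bijections of ℝⁿ generated by the Euclidean motions s₁, …, s_n. Then the action of Γ(A) on ℝⁿ is free: every element of Γ(A) other than the identity has no fixed point in ℝⁿ. -/

import Mathlib

/-- The Euclidean motion `s_i : ℝⁿ → ℝⁿ` associated to a Bott matrix `A = [a_{ij}]`:
`(s_i x)_j = x_j` for `j < i`, `(s_i x)_i = x_i + 1/2`, and `(s_i x)_j = (-1)^{a_{ij}} x_j`
for `j > i`. -/
noncomputable def sA {n : ℕ} (A : Fin n → Fin n → ℕ) (i : Fin n) (x : Fin n → ℝ) :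
    Fin n → ℝ :=
  fun j => if j < i then x j else if j = i then x j + 1 / 2 else (-1 : ℝ) ^ (A i j) * x j

/-- The sign of the `j`-th coordinate of a group element whose generator-count parities
are `c`. -/
noncomputable def bottSign {n : ℕ} (A : Fin n → Fin n → ℕ) (c : Fin n → ZMod 2) (j : Fin n) :
    ℝ :=
  (-1 : ℝ) ^ (∑ i, A i j * (c i).val)

/-- Structural invariant satisfied by every element of `Γ(A)`: it acts diagonally and
affinely with signs `bottSign A c` and half-integral translations whose parities match `c`. -/
def BottInv {n : ℕ} (A : Fin n → Fin n → ℕ) (σ : Equiv.Perm (Fin n → ℝ)) : Prop :=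
  ∃ c : Fin n → ZMod 2, ∃ t : Fin n → ℝ,
    (∀ x j, σ x j = bottSign A c j * x j + t j) ∧
    (∀ j, ∃ m : ℤ, t j = m / 2 ∧ (m : ZMod 2) = c j)

lemma neg_one_pow_congr_mod {a b : ℕ} (h : a % 2 = b % 2) : ((-1 : ℝ) ^ a = (-1) ^ b) := by
  rw [neg_one_pow_eq_pow_mod_two, h, ← neg_one_pow_eq_pow_mod_two]

lemma bottSign_sq {n : ℕ} (A : Fin n → Fin n → ℕ) (c : Fin n → ZMod 2) (j : Fin n) :
    bottSign A c j * bottSign A c j = 1 := by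
  unfold bottSign
  rw [← pow_add]
  exact Even.neg_one_pow ⟨_, rfl⟩

lemma bottSign_add {n : ℕ} (A : Fin n → Fin n → ℕ) (c c' : Fin n → ZMod 2) (j : Fin n) :
    bottSign A (c + c') j = bottSign A c j * bottSign A c' j := by
  unfold bottSign
  rw [← pow_add, ← Finset.sum_add_distrib]
  refine neg_one_pow_congr_mod ?_
  have h2 : ∀ i : Fin n,
      A i j * (((c + c') i).val) % 2 = (A i j * (c i).val + A i j * (c' i).val) % 2 := by
    intro i
    have : ((c + c') i).val = ((c i).val + (c' i).val) % 2 := ZMod.val_add (c i) (c' i)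
    rw [this, ← mul_add]
    exact Nat.ModEq.mul_left _ (Nat.mod_modEq _ 2)
  rw [Finset.sum_nat_mod, Finset.sum_congr rfl (fun i _ => h2 i), ← Finset.sum_nat_mod]

lemma bottInv_closure {n : ℕ} (A : Fin n → Fin n → ℕ)
    (hAupper : ∀ i j : Fin n, j ≤ i → A i j = 0) (σ : Equiv.Perm (Fin n → ℝ))
    (hσ : σ ∈ Subgroup.closure
        {σ : Equiv.Perm (Fin n → ℝ) | ∃ i : Fin n, ∀ x, σ x = sA A i x}) :
    BottInv A σ := by
  induction hσ using Subgroup.closure_induction with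
  | mem σ hσ =>
    obtain ⟨i, hi⟩ := hσ
    refine ⟨fun i' => if i' = i then 1 else 0, fun j => if j = i then 1 / 2 else 0, ?_, ?_⟩
    · intro x j
      have hsign : bottSign A (fun i' => if i' = i then (1 : ZMod 2) else 0) j
          = (-1 : ℝ) ^ (A i j) := by
        unfold bottSign
        congr 1
        have : ∀ i' : Fin n,
            A i' j * ((if i' = i then (1 : ZMod 2) else 0).val)
              = if i' = i then A i j else 0 := by
          intro i'
          have hv : ((1 : ZMod 2)).val = 1 := rfl
          by_cases h : i' = i <;> simp [h, hv]
        rw [Finset.sum_congr rfl (fun i' _ => this i'), Finset.sum_ite_eq' Finset.univ i]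
        simp
      rw [hi x, hsign]
      unfold sA
      rcases lt_trichotomy j i with h | h | h
      · have hji : j ≠ i := ne_of_lt h
        have hA : A i j = 0 := hAupper i j h.le
        simp [h, hji, hA]
      · have hA : A i i = 0 := hAupper i i le_rfl
        simp [h, hA]
      · have h1 : ¬ (j < i) := not_lt_of_gt h
        have h2 : j ≠ i := (ne_of_lt h).symm
        simp [h1, h2]
    · intro j
      by_cases h : j = i
      · exact ⟨1, by simp [h], by simp [h]⟩
      · exact ⟨0, by simp [h], by simp [h]⟩
  | one =>
    exact ⟨0, 0, fun x j => by simp [bottSign], fun j => ⟨0, by simp, by simp⟩⟩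
  | mul σ τ hσm hτm ihσ ihτ =>
    obtain ⟨c, t, h1, h2⟩ := ihσ
    obtain ⟨c', t', h1', h2'⟩ := ihτ
    refine ⟨c + c', fun j => bottSign A c j * t' j + t j, ?_, ?_⟩
    · intro x j
      have : (σ * τ) x = σ (τ x) := rfl
      rw [this, h1 (τ x) j, h1' x j, bottSign_add]
      ring
    · intro j
      obtain ⟨m, hm, hmc⟩ := h2 j
      obtain ⟨m', hm', hmc'⟩ := h2' j
      refine ⟨m + (-1) ^ (∑ i, A i j * (c i).val) * m', ?_, ?_⟩
      · show bottSign A c j * t' j + t j = _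
        rw [hm, hm']
        unfold bottSign
        push_cast
        ring
      · push_cast
        have hne : (-1 : ZMod 2) = 1 := rfl
        rw [hne, one_pow, one_mul, hmc, hmc']
        exact (Pi.add_apply c c' j).symm
  | inv σ hσm ihσ =>
    obtain ⟨c, t, h1, h2⟩ := ihσ
    have hinv : ∀ v : Fin n → ℝ, ∀ j, σ⁻¹ v j = bottSign A c j * v j + -(bottSign A c j * t j) := by
      intro v j
      set w : Fin n → ℝ := fun j => bottSign A c j * (v j - t j) with hw
      have hσw : σ w = v := by
        funext j'
        rw [h1 w j', hw]
        have := bottSign_sq A c j'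
        calc bottSign A c j' * (bottSign A c j' * (v j' - t j')) + t j'
            = (bottSign A c j' * bottSign A c j') * (v j' - t j') + t j' := by ring
          _ = v j' := by rw [this]; ring
      have : σ⁻¹ v = w := by rw [← hσw]; exact Equiv.symm_apply_apply σ w
      rw [this, hw]
      ring
    refine ⟨c, fun j => -(bottSign A c j * t j), fun v j => hinv v j, ?_⟩
    · intro j
      obtain ⟨m, hm, hmc⟩ := h2 j
      refine ⟨-((-1) ^ (∑ i, A i j * (c i).val) * m), ?_, ?_⟩
      · show -(bottSign A c j * t j) = _
        rw [hm]
        unfold bottSign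
        push_cast
        ring
      · push_cast
        have hne : (-1 : ZMod 2) = 1 := rfl
        rw [hne, one_pow, one_mul, hmc, CharTwo.neg_eq]

/-- Let `A = [a_{ij}]` be a Bott matrix of size `n` (strictly upper triangular with entries
in `{0,1}`) and let `Γ(A)` be the subgroup of bijections of `ℝⁿ` generated by the
Euclidean motions `s₁, …, s_n`.  Then the action of `Γ(A)` on `ℝⁿ` is free: every element
of `Γ(A)` other than the identity has no fixed point in `ℝⁿ`. -/
theorem stmt8 {n : ℕ} (A : Fin n → Fin n → ℕ)
    (hA01 : ∀ i j, A i j ≤ 1) (hAupper : ∀ i j : Fin n, j ≤ i → A i j = 0) :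
    ∀ σ ∈ Subgroup.closure
        {σ : Equiv.Perm (Fin n → ℝ) | ∃ i : Fin n, ∀ x, σ x = sA A i x},
      σ ≠ 1 → ∀ x : Fin n → ℝ, σ x ≠ x := by
  intro σ hσ hne x hfix
  obtain ⟨c, t, h1, h2⟩ := bottInv_closure A hAupper σ hσ
  apply hne
  have key : ∀ k : ℕ, ∀ hk : k < n, c ⟨k, hk⟩ = 0 ∧ t ⟨k, hk⟩ = 0 := by
    intro k
    induction k using Nat.strong_induction_on with
    | _ k IH =>
      intro hk
      set j : Fin n := ⟨k, hk⟩ with hj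
      have hsign : bottSign A c j = 1 := by
        unfold bottSign
        have hz : ∀ i : Fin n, A i j * (c i).val = 0 := by
          intro i
          rcases lt_or_ge (i : ℕ) k with h | h
          · have hc := (IH i h i.isLt).1
            rw [Fin.eta] at hc
            simp [hc]
          · have : A i j = 0 := hAupper i j h
            simp [this]
        rw [Finset.sum_eq_zero (fun i _ => hz i), pow_zero]
      have hfj := congrFun hfix j
      rw [h1 x j, hsign, one_mul] at hfj
      have ht : t j = 0 := by linarith
      obtain ⟨m, hm, hmc⟩ := h2 j
      have hm0 : m = 0 := by
        have : (m : ℝ) = 0 := by rw [ht] at hm; linarith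
        exact_mod_cast this
      refine ⟨?_, ht⟩
      rw [← hmc, hm0]
      simp
  ext v j
  have hc0 : ∀ i : Fin n, c i = 0 := by
    intro i
    have := (key i i.isLt).1
    rwa [Fin.eta] at this
  have ht0 : t j = 0 := by
    have := (key j j.isLt).2
    rwa [Fin.eta] at this
  rw [h1 v j, ht0]
  unfold bottSign
  simp [hc0]
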